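/- Suppose Z(t) has regenerative increments over T_n with E[T_1] < ∞ and E[|Z(T_1)|] < ∞. Then Z(t)/t → a := E[Z(T_1)]/E[T_1] almost surely as t → ∞ if and only if E[M_1] < ∞. -/

import Mathlib

open MeasureTheory ProbabilityTheory Filter Set Topology
open scoped ENNReal NNReal

noncomputable section

variable {Ω : Type*} [MeasurableSpace Ω]

/-- The renewal times `T n = ξ 1 + ⋯ + ξ n` (here `ξ i` in Lean is `ξ_{i+1}` in math). -/
def rT (ξ : ℕ → Ω → ℝ) (n : ℕ) (ω : Ω) : ℝ := ∑ i ∈ Finset.range n, ξ i ω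

/-- `N(t) = max {n : T n ≤ t}`. -/
def rN (ξ : ℕ → Ω → ℝ) (t : ℝ) (ω : Ω) : ℕ := sSup {n : ℕ | rT ξ n ω ≤ t}

/-- The `n`-th regenerative increment `ζ_{n+1} = (ξ_{n+1}, (Z(t + T_n) - Z(T_n))_{0 ≤ t ≤ ξ_{n+1}})`,
the path being stopped at `ξ_{n+1}`. -/
def rIncr (ξ : ℕ → Ω → ℝ) (Z : ℝ → Ω → ℝ) (n : ℕ) (ω : Ω) : ℝ × (ℝ → ℝ) :=
  (ξ n ω, fun s => Z (min (max s 0) (ξ n ω) + rT ξ n ω) ω - Z (rT ξ n ω) ω)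

/-- `M_{n+1} = sup_{T_n ≤ s ≤ T_{n+1}} |Z(s) - Z(T_n)|`, as an extended real. -/
def rM (ξ : ℕ → Ω → ℝ) (Z : ℝ → Ω → ℝ) (n : ℕ) (ω : Ω) : ℝ≥0∞ :=
  ⨆ s ∈ Set.Icc (rT ξ n ω) (rT ξ (n + 1) ω), ENNReal.ofReal |Z s ω - Z (rT ξ n ω) ω|

/-- `Z` is a càdlàg process with `Z(0) = 0` having regenerative increments over the
renewal times `T n` built from the positive interarrival times `ξ`. -/
def RegenIncrements (μ : Measure Ω) (ξ : ℕ → Ω → ℝ) (Z : ℝ → Ω → ℝ) : Prop :=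
  (∀ n ω, 0 < ξ n ω) ∧
  (∀ ω, Z 0 ω = 0) ∧
  (∀ ω t, ContinuousWithinAt (fun s => Z s ω) (Set.Ici t) t) ∧
  (∀ ω t, 0 < t → ∃ l : ℝ, Filter.Tendsto (fun s => Z s ω) (nhdsWithin t (Set.Iio t)) (nhds l)) ∧
  iIndepFun (rIncr ξ Z) μ ∧
  (∀ n, IdentDistrib (rIncr ξ Z n) (rIncr ξ Z 0) μ μ)



section StmtNineHelpers

set_option linter.unusedSectionVars false
set_option linter.unusedVariables false

variable {μ : Measure Ω}

lemma my_count_ge (x : ℝ≥0∞) :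
    x ≤ ∑' n : ℕ, if (n : ℝ≥0∞) < x then 1 else 0 := by
  rcases eq_or_ne x ⊤ with rfl | hx
  · have h1 : ∀ n : ℕ, (if (n : ℝ≥0∞) < ⊤ then (1:ℝ≥0∞) else 0) = 1 := fun n => by
      simp [ENNReal.natCast_lt_top n]
    rw [tsum_congr h1]
    simp [ENNReal.tsum_const_eq_top_of_ne_zero]
  · set r := x.toReal with hr
    have hr0 : 0 ≤ r := ENNReal.toReal_nonneg
    have hxr : x = ENNReal.ofReal r := (ENNReal.ofReal_toReal hx).symm
    calc x = ENNReal.ofReal r := hxr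
    _ ≤ (⌈r⌉₊ : ℝ≥0∞) := by
        rw [← ENNReal.ofReal_natCast]
        exact ENNReal.ofReal_le_ofReal (Nat.le_ceil r)
    _ = ∑ n ∈ Finset.range ⌈r⌉₊, (1:ℝ≥0∞) := by simp
    _ = ∑ n ∈ Finset.range ⌈r⌉₊, (if (n : ℝ≥0∞) < x then (1:ℝ≥0∞) else 0) := by
        refine Finset.sum_congr rfl fun n hn => ?_
        rw [if_pos]
        rw [hxr, ← ENNReal.ofReal_natCast]
        exact ENNReal.ofReal_lt_ofReal_iff_of_nonneg (by positivity) |>.2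
          (Nat.lt_ceil.1 (Finset.mem_range.1 hn))
    _ ≤ _ := ENNReal.sum_le_tsum _

lemma my_count_le (x : ℝ≥0∞) :
    (∑' n : ℕ, if (n : ℝ≥0∞) < x then 1 else 0) ≤ x + 1 := by
  rcases eq_or_ne x ⊤ with rfl | hx
  · simp
  · set r := x.toReal with hr
    have hr0 : 0 ≤ r := ENNReal.toReal_nonneg
    have hxr : x = ENNReal.ofReal r := (ENNReal.ofReal_toReal hx).symm
    have key : ∀ n : ℕ, (if (n : ℝ≥0∞) < x then (1:ℝ≥0∞) else 0)
        ≤ (if n ∈ Finset.range ⌈r⌉₊ then (1:ℝ≥0∞) else 0) := by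
      intro n
      by_cases h : (n : ℝ≥0∞) < x
      · rw [if_pos h, if_pos]
        rw [Finset.mem_range, Nat.lt_ceil]
        have := h
        rw [hxr, ← ENNReal.ofReal_natCast,
          ENNReal.ofReal_lt_ofReal_iff_of_nonneg (by positivity)] at this
        exact this
      · rw [if_neg h]; exact zero_le
    calc (∑' n : ℕ, if (n : ℝ≥0∞) < x then (1:ℝ≥0∞) else 0)
        ≤ ∑' n : ℕ, (if n ∈ Finset.range ⌈r⌉₊ then (1:ℝ≥0∞) else 0) :=
          ENNReal.tsum_le_tsum key
    _ = ∑ n ∈ Finset.range ⌈r⌉₊, (1:ℝ≥0∞) := by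
        rw [tsum_eq_sum (s := Finset.range ⌈r⌉₊) (fun n hn => if_neg hn)]
        exact Finset.sum_congr rfl fun n hn => if_pos hn
    _ = (⌈r⌉₊ : ℝ≥0∞) := by simp
    _ ≤ x + 1 := by
        rw [hxr, ← ENNReal.ofReal_natCast, ← ENNReal.ofReal_one, ← ENNReal.ofReal_add hr0 one_pos.le]
        exact ENNReal.ofReal_le_ofReal (Nat.ceil_lt_add_one hr0).le

lemma my_tsum_eq {f : Ω → ℝ≥0∞} (hf : AEMeasurable f μ) {c : ℝ} (hc : 0 < c) :
    ∑' n : ℕ, μ {ω | ENNReal.ofReal (c * n) < f ω}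
      = ∫⁻ ω, ∑' n : ℕ, (if (n : ℝ≥0∞) < f ω / ENNReal.ofReal c then 1 else 0) ∂μ := by
  have hc0 : ENNReal.ofReal c ≠ 0 := by simp [hc, ENNReal.ofReal_eq_zero, not_le]
  have hct : ENNReal.ofReal c ≠ ⊤ := ENNReal.ofReal_ne_top
  set g : Ω → ℝ≥0∞ := fun ω => f ω / ENNReal.ofReal c with hg
  have hgm : AEMeasurable g μ := hf.div aemeasurable_const
  set g' := hgm.mk g with hg'
  have hgg' : g =ᵐ[μ] g' := hgm.ae_eq_mk
  have hsets : ∀ n : ℕ, {ω | ENNReal.ofReal (c * n) < f ω} = {ω | (n : ℝ≥0∞) < g ω} := by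
    intro n
    ext ω
    simp only [mem_setOf_eq, hg]
    rw [ENNReal.lt_div_iff_mul_lt (Or.inl hc0) (Or.inl hct)]
    rw [← ENNReal.ofReal_natCast n, ← ENNReal.ofReal_mul (by positivity), mul_comm]
  have hsets' : ∀ n : ℕ, μ {ω | (n : ℝ≥0∞) < g ω} = μ {ω | (n : ℝ≥0∞) < g' ω} := by
    intro n
    apply measure_congr
    filter_upwards [hgg'] with ω hω
    show ((n : ℝ≥0∞) < g ω) = ((n : ℝ≥0∞) < g' ω)
    rw [hω]
  calc ∑' n : ℕ, μ {ω | ENNReal.ofReal (c * n) < f ω}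
      = ∑' n : ℕ, μ {ω | (n : ℝ≥0∞) < g' ω} := by
        refine tsum_congr fun n => ?_
        rw [hsets n, hsets' n]
    _ = ∑' n : ℕ, ∫⁻ ω, ({ω | (n : ℝ≥0∞) < g' ω}).indicator 1 ω ∂μ := by
        refine tsum_congr fun n => ?_
        rw [lintegral_indicator_one (measurableSet_lt measurable_const hgm.measurable_mk)]
    _ = ∫⁻ ω, ∑' n : ℕ, ({ω | (n : ℝ≥0∞) < g' ω}).indicator 1 ω ∂μ := by
        rw [← lintegral_tsum (fun n => ((measurable_one.indicator
          (measurableSet_lt measurable_const hgm.measurable_mk))).aemeasurable)]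
    _ = ∫⁻ ω, ∑' n : ℕ, (if (n : ℝ≥0∞) < g' ω then 1 else 0) ∂μ := by
        refine lintegral_congr fun ω => tsum_congr fun n => ?_
        by_cases h : (n : ℝ≥0∞) < g' ω
        · simp [Set.indicator, h]
        · simp [Set.indicator, h]
    _ = ∫⁻ ω, ∑' n : ℕ, (if (n : ℝ≥0∞) < g ω then 1 else 0) ∂μ := by
        refine lintegral_congr_ae ?_
        filter_upwards [hgg'] with ω hω
        rw [hω]

lemma my_tsum_meas_le [IsFiniteMeasure μ] {f : Ω → ℝ≥0∞} (hf : AEMeasurable f μ) {c : ℝ}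
    (hc : 0 < c) (hfin : ∫⁻ ω, f ω ∂μ ≠ ∞) :
    ∑' n : ℕ, μ {ω | ENNReal.ofReal (c * n) < f ω} ≠ ∞ := by
  rw [my_tsum_eq hf hc]
  have hb : (∫⁻ ω, ∑' n : ℕ, (if (n : ℝ≥0∞) < f ω / ENNReal.ofReal c then 1 else 0) ∂μ)
      ≤ ∫⁻ ω, (f ω / ENNReal.ofReal c + 1) ∂μ :=
    lintegral_mono fun ω => my_count_le _
  refine ne_top_of_le_ne_top ?_ hb
  rw [lintegral_add_right' _ aemeasurable_const]
  simp only [lintegral_const, ne_eq, ENNReal.add_eq_top, not_or]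
  constructor
  · simp only [div_eq_mul_inv]
    rw [lintegral_mul_const'' _ hf]
    exact ENNReal.mul_ne_top hfin (by simp [hc, ENNReal.ofReal_eq_zero, not_le])
  · exact ENNReal.mul_ne_top ENNReal.one_ne_top (measure_ne_top μ _)

lemma my_tsum_meas_ge {f : Ω → ℝ≥0∞} (hf : AEMeasurable f μ) {c : ℝ}
    (hc : 0 < c) (hinf : ∫⁻ ω, f ω ∂μ = ∞) :
    ∑' n : ℕ, μ {ω | ENNReal.ofReal (c * n) < f ω} = ∞ := by
  rw [my_tsum_eq hf hc]
  have hb : (∫⁻ ω, f ω / ENNReal.ofReal c ∂μ)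
      ≤ ∫⁻ ω, ∑' n : ℕ, (if (n : ℝ≥0∞) < f ω / ENNReal.ofReal c then 1 else 0) ∂μ :=
    lintegral_mono fun ω => my_count_ge _
  rw [eq_top_iff]
  refine le_trans ?_ hb
  simp only [div_eq_mul_inv]
  rw [lintegral_mul_const'' _ hf, hinf]
  rw [top_le_iff, ENNReal.mul_eq_top]
  right
  exact ⟨rfl, ENNReal.inv_ne_zero.2 ENNReal.ofReal_ne_top⟩

lemma my_iIndep_mono {ι : Type*} {m' m : ι → MeasurableSpace Ω} (h : iIndep m μ)
    (hle : ∀ i, m' i ≤ m i) : iIndep m' μ :=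
  (iIndep_iff _ _).2 fun s f H => (iIndep_iff _ _).1 h s fun i hi => hle i _ (H i hi)

lemma my_iIndepFun_ae_eq {ι E : Type*} {mE : MeasurableSpace E} {f g : ι → Ω → E}
    (h : iIndepFun (m := fun _ => mE) f μ) (hfg : ∀ i, f i =ᵐ[μ] g i) :
    iIndepFun (m := fun _ => mE) g μ := by
  rw [iIndepFun_iff_measure_inter_preimage_eq_mul] at h ⊢
  intro S sets hsets
  have h1 : ∀ i ∈ S, f i ⁻¹' sets i =ᵐ[μ] g i ⁻¹' sets i := fun i _ => by
    filter_upwards [hfg i] with ω hω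
    show (f i ω ∈ sets i) = (g i ω ∈ sets i)
    rw [hω]
  have h2 : (⋂ i ∈ S, f i ⁻¹' sets i : Set Ω) =ᵐ[μ] (⋂ i ∈ S, g i ⁻¹' sets i : Set Ω) := by
    have hae : ∀ᵐ ω ∂μ, ∀ i ∈ (S : Set ι), ((f i ω ∈ sets i) = (g i ω ∈ sets i)) := by
      rw [ae_ball_iff S.countable_toSet]
      intro i hi
      filter_upwards [hfg i] with ω hω
      rw [hω]
    filter_upwards [hae] with ω hω
    show (ω ∈ ⋂ i ∈ S, f i ⁻¹' sets i) = (ω ∈ ⋂ i ∈ S, g i ⁻¹' sets i)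
    simp only [mem_iInter, mem_preimage]
    exact iff_iff_eq.1 (forall₂_congr fun i hi => (hω i (Finset.mem_coe.2 hi)) ▸ Iff.rfl)
  rw [← measure_congr h2, h S hsets]
  exact Finset.prod_congr rfl fun i hi => measure_congr (h1 i hi)

lemma my_iIndepSet_preimage {ι E : Type*} {mE : MeasurableSpace E} {f : ι → Ω → E}
    (h : iIndepFun (m := fun _ => mE) f μ) {S : ι → Set E} (hS : ∀ i, MeasurableSet (S i)) :
    iIndepSet (fun i => f i ⁻¹' S i) μ := by
  rw [iIndepSet_iff_iIndep]
  rw [iIndepFun_iff_iIndep] at h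
  refine my_iIndep_mono h fun i => ?_
  refine MeasurableSpace.generateFrom_le fun t ht => ?_
  rw [Set.mem_singleton_iff] at ht
  subst ht
  exact ⟨S i, hS i, rfl⟩


lemma my_nat_succ_div_tendsto : Tendsto (fun n : ℕ => ((n:ℝ) + 1) / n) atTop (𝓝 1) := by
  have h : Tendsto (fun n : ℕ => 1 + (n:ℝ)⁻¹) atTop (𝓝 (1 + 0)) :=
    tendsto_const_nhds.add tendsto_inv_atTop_nhds_zero_nat
  rw [add_zero] at h
  refine h.congr' ?_
  filter_upwards [eventually_ge_atTop 1] with n hn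
  have hn0 : (n:ℝ) ≠ 0 := by positivity
  field_simp

lemma my_T_succ_div {T : ℕ → ℝ} {m : ℝ}
    (hT : Tendsto (fun n : ℕ => T n / n) atTop (𝓝 m)) :
    Tendsto (fun n : ℕ => T (n + 1) / n) atTop (𝓝 m) := by
  have h1 : Tendsto (fun n : ℕ => T (n + 1) / (n + 1) * (((n:ℝ) + 1) / n)) atTop (𝓝 (m * 1)) := by
    refine Tendsto.mul ?_ my_nat_succ_div_tendsto
    have := hT.comp (tendsto_add_atTop_nat 1)
    refine this.congr fun n => ?_
    simp [Function.comp, Nat.cast_add]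
  rw [mul_one] at h1
  refine h1.congr' ?_
  filter_upwards [eventually_ge_atTop 1] with n hn
  have hn0 : (n:ℝ) ≠ 0 := by positivity
  have hn1 : (n:ℝ) + 1 ≠ 0 := by positivity
  field_simp

lemma my_T_atTop {T : ℕ → ℝ} {m : ℝ} (hm : 0 < m)
    (hT : Tendsto (fun n : ℕ => T n / n) atTop (𝓝 m)) :
    Tendsto T atTop atTop := by
  have hev : ∀ᶠ n : ℕ in atTop, m / 2 ≤ T n / n := by
    have : ∀ᶠ x in 𝓝 m, m / 2 ≤ x := eventually_ge_nhds (by linarith)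
    exact hT.eventually this
  have hbound : ∀ᶠ n : ℕ in atTop, m / 2 * n ≤ T n := by
    filter_upwards [hev, eventually_ge_atTop 1] with n h1 h2
    have hn : (0:ℝ) < n := by positivity
    calc m / 2 * n ≤ T n / n * n := by nlinarith
    _ = T n := by field_simp
  exact tendsto_atTop_mono' _ hbound
    (Tendsto.const_mul_atTop (by linarith) tendsto_natCast_atTop_atTop)

lemma my_xi_div_tendsto {T : ℕ → ℝ} {m : ℝ}
    (hT : Tendsto (fun n : ℕ => T n / n) atTop (𝓝 m)) :
    Tendsto (fun n : ℕ => (T (n + 1) - T n) / n) atTop (𝓝 0) := by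
  have h := (my_T_succ_div hT).sub hT
  rw [sub_self] at h
  refine h.congr fun n => ?_
  ring

lemma my_toReal_div_tendsto {M : ℕ → ℝ≥0∞} (hfin : ∀ n, M n ≠ ⊤)
    (h : ∀ k : ℕ, ∀ᶠ n : ℕ in atTop, M n ≤ ENNReal.ofReal ((1 / ((k:ℝ) + 1)) * n)) :
    Tendsto (fun n : ℕ => (M n).toReal / n) atTop (𝓝 0) := by
  rw [Metric.tendsto_atTop]
  intro ε hε
  obtain ⟨k, hk⟩ := exists_nat_one_div_lt hε
  obtain ⟨N, hN⟩ := (h k).exists_forall_of_atTop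
  refine ⟨max N 1, fun n hn => ?_⟩
  have hn1 : 1 ≤ n := le_trans (le_max_right _ _) hn
  have hnN : N ≤ n := le_trans (le_max_left _ _) hn
  have hnpos : (0:ℝ) < n := by exact_mod_cast Nat.lt_of_lt_of_le Nat.zero_lt_one hn1
  have hle : (M n).toReal ≤ (1 / ((k:ℝ) + 1)) * n :=
    ENNReal.toReal_le_of_le_ofReal (by positivity) (hN n hnN)
  have h2 : (M n).toReal / n ≤ 1 / ((k:ℝ) + 1) := by
    rw [div_le_iff₀ hnpos]
    calc (M n).toReal ≤ (1 / ((k:ℝ) + 1)) * n := hle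
    _ = 1 / ((k:ℝ) + 1) * n := rfl
  have h3 : 0 ≤ (M n).toReal / n := by positivity
  rw [Real.dist_eq, sub_zero, abs_of_nonneg h3]
  exact lt_of_le_of_lt h2 hk


section DetHelpers

variable {ξ : ℕ → Ω → ℝ} {Z : ℝ → Ω → ℝ} {ω : Ω} {n : ℕ} {m b a : ℝ}

lemma rT_succ (n : ℕ) : rT ξ (n + 1) ω = rT ξ n ω + ξ n ω := by
  simp [rT, Finset.sum_range_succ]

lemma rT_zero : rT ξ 0 ω = 0 := by simp [rT]

lemma rN_spec (htop : Tendsto (fun n => rT ξ n ω) atTop atTop) {t : ℝ} (ht : 0 ≤ t) :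
    rT ξ (rN ξ t ω) ω ≤ t ∧ t < rT ξ (rN ξ t ω + 1) ω := by
  have hbdd : BddAbove {n : ℕ | rT ξ n ω ≤ t} := by
    obtain ⟨K, hK⟩ := (htop.eventually (eventually_gt_atTop t)).exists_forall_of_atTop
    exact ⟨K, fun n hn => by
      by_contra hlt
      exact absurd hn (not_le.2 (hK n (le_of_not_ge hlt)))⟩
  have hne : {n : ℕ | rT ξ n ω ≤ t}.Nonempty := ⟨0, by simpa [rT_zero] using ht⟩
  constructor
  · exact Nat.sSup_mem hne hbdd
  · by_contra hmem
    have : rN ξ t ω + 1 ≤ rN ξ t ω := le_csSup hbdd (not_lt.1 hmem)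
    omega

lemma rN_ge (htop : Tendsto (fun n => rT ξ n ω) atTop atTop) {t : ℝ} {k : ℕ}
    (hk : rT ξ k ω ≤ t) : k ≤ rN ξ t ω := by
  have hbdd : BddAbove {n : ℕ | rT ξ n ω ≤ t} := by
    obtain ⟨K, hK⟩ := (htop.eventually (eventually_gt_atTop t)).exists_forall_of_atTop
    exact ⟨K, fun n hn => by
      by_contra hlt
      exact absurd hn (not_le.2 (hK n (le_of_not_ge hlt)))⟩
  exact le_csSup hbdd hk

lemma rN_atTop (htop : Tendsto (fun n => rT ξ n ω) atTop atTop) :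
    Tendsto (fun t : ℝ => rN ξ t ω) atTop atTop := by
  refine tendsto_atTop.2 fun k => ?_
  filter_upwards [eventually_ge_atTop (rT ξ k ω)] with t ht
  exact rN_ge htop ht

lemma my_phi_incr (hpos : 0 < ξ n ω) :
    Filter.liminf (fun k : ℕ => (rIncr ξ Z n ω).2 k) atTop
      = Z (rT ξ (n + 1) ω) ω - Z (rT ξ n ω) ω := by
  have hconst : ∀ᶠ k : ℕ in atTop, (rIncr ξ Z n ω).2 k
      = Z (rT ξ (n + 1) ω) ω - Z (rT ξ n ω) ω := by
    filter_upwards [eventually_ge_atTop ⌈ξ n ω⌉₊] with k hk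
    have h1 : ξ n ω ≤ (k : ℝ) := le_trans (Nat.le_ceil _) (by exact_mod_cast hk)
    have h2 : (0:ℝ) ≤ k := Nat.cast_nonneg k
    show Z (min (max (k:ℝ) 0) (ξ n ω) + rT ξ n ω) ω - Z (rT ξ n ω) ω = _
    rw [max_eq_left h2, min_eq_right h1, rT_succ, add_comm]
  have : Tendsto (fun k : ℕ => (rIncr ξ Z n ω).2 k) atTop
      (𝓝 (Z (rT ξ (n + 1) ω) ω - Z (rT ξ n ω) ω)) :=
    Tendsto.congr' (by filter_upwards [hconst] with k hk using hk.symm) tendsto_const_nhds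
  exact this.liminf_eq

lemma my_psi_incr (hpos : 0 < ξ n ω)
    (hrc : ∀ t, ContinuousWithinAt (fun s => Z s ω) (Set.Ici t) t) :
    (⨆ q : ℚ, ENNReal.ofReal |(rIncr ξ Z n ω).2 q|) = rM ξ Z n ω := by
  set T := rT ξ n ω with hT
  set x := ξ n ω with hx
  have hT' : rT ξ (n + 1) ω = T + x := rT_succ n
  -- ψ-terms are values at points of the interval
  apply le_antisymm
  · refine iSup_le fun q => ?_
    have hmem : min (max (q:ℝ) 0) x + T ∈ Set.Icc T (rT ξ (n+1) ω) := by
      constructor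
      · have : (0:ℝ) ≤ min (max (q:ℝ) 0) x := le_min (le_max_right _ _) hpos.le
        linarith
      · rw [hT']
        have : min (max (q:ℝ) 0) x ≤ x := min_le_right _ _
        linarith
    refine le_trans ?_ (le_iSup₂ (f := fun s (_ : s ∈ Set.Icc T (rT ξ (n+1) ω)) =>
      ENNReal.ofReal |Z s ω - Z T ω|) _ hmem)
    exact le_of_eq rfl
  · refine iSup₂_le fun s hs => ?_
    rcases eq_or_lt_of_le hs.2 with heq | hlt
    · -- s = right endpoint: use a rational above x
      obtain ⟨q, hq⟩ := exists_rat_gt (max x 0)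
      have hq0 : (0:ℝ) ≤ q := le_of_lt (lt_of_le_of_lt (le_max_right _ _) hq)
      have hqx : x ≤ (q:ℝ) := le_of_lt (lt_of_le_of_lt (le_max_left _ _) hq)
      refine le_trans (le_of_eq ?_) (le_iSup (fun q : ℚ =>
        ENNReal.ofReal |(rIncr ξ Z n ω).2 q|) q)
      show ENNReal.ofReal |Z s ω - Z T ω|
          = ENNReal.ofReal |Z (min (max (q:ℝ) 0) x + T) ω - Z T ω|
      rw [max_eq_left hq0, min_eq_right hqx, heq, hT', add_comm]
    · -- T ≤ s < T + x : approximate from the right by rationals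
      set u := s - T with hu
      have hu0 : 0 ≤ u := by simp [hu]; linarith [hs.1]
      have hux : u < x := by rw [hT'] at hlt; simp [hu]; linarith
      -- choose rationals q j with u < q j < min x (u + 1/(j+1))
      have hchoice : ∀ j : ℕ, ∃ q : ℚ, u < q ∧ (q:ℝ) < min x (u + 1/(j+1)) := by
        intro j
        have : u < min x (u + 1/(j+1)) := by
          refine lt_min hux ?_
          have : (0:ℝ) < 1/(j+1) := by positivity
          linarith
        obtain ⟨q, h1, h2⟩ := exists_rat_btwn this
        exact ⟨q, h1, h2⟩
      choose q hq1 hq2 using hchoice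
      have hqx : ∀ j, (q j : ℝ) < x := fun j => lt_of_lt_of_le (hq2 j) (min_le_left _ _)
      have hq0 : ∀ j, (0:ℝ) ≤ q j := fun j => le_trans hu0 (hq1 j).le
      have hqtend : Tendsto (fun j : ℕ => (q j : ℝ)) atTop (𝓝 u) := by
        have hub : Tendsto (fun j : ℕ => u + 1/((j:ℝ)+1)) atTop (𝓝 (u + 0)) := by
          refine tendsto_const_nhds.add ?_
          exact tendsto_one_div_add_atTop_nhds_zero_nat
        rw [add_zero] at hub
        refine tendsto_of_tendsto_of_tendsto_of_le_of_le tendsto_const_nhds hub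
          (fun j => (hq1 j).le) (fun j => le_of_lt (lt_of_lt_of_le (hq2 j) (min_le_right _ _)))
      -- the values at q j tend to Z s ω
      have hval : ∀ j, (rIncr ξ Z n ω).2 (q j) = Z ((q j : ℝ) + T) ω - Z T ω := by
        intro j
        show Z (min (max ((q j):ℝ) 0) x + T) ω - Z T ω = _
        rw [max_eq_left (hq0 j), min_eq_left (hqx j).le]
      have htq : Tendsto (fun j : ℕ => (q j : ℝ) + T) atTop (𝓝[Set.Ici s] s) := by
        rw [tendsto_nhdsWithin_iff]
        constructor
        · have := hqtend.add (tendsto_const_nhds (x := T))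
          have hus : u + T = s := by simp [hu]
          rwa [hus] at this
        · filter_upwards with j
          have := (hq1 j).le
          simp only [Set.mem_Ici]
          have : s ≤ (q j : ℝ) + T := by simp [hu] at this ⊢; linarith
          exact this
      have hZtend : Tendsto (fun j : ℕ => Z ((q j : ℝ) + T) ω) atTop (𝓝 (Z s ω)) :=
        (hrc s).tendsto.comp htq
      have hofR : Tendsto (fun j : ℕ => ENNReal.ofReal |(rIncr ξ Z n ω).2 (q j)|) atTop
          (𝓝 (ENNReal.ofReal |Z s ω - Z T ω|)) := by
        have h1 : Tendsto (fun j : ℕ => |Z ((q j : ℝ) + T) ω - Z T ω|) atTop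
            (𝓝 |Z s ω - Z T ω|) := ((hZtend.sub tendsto_const_nhds).abs)
        have h2 := (ENNReal.continuous_ofReal.tendsto _).comp h1
        refine h2.congr fun j => ?_
        simp only [Function.comp_apply, hval j]
      refine le_of_tendsto hofR ?_
      filter_upwards with j
      exact le_iSup (fun q : ℚ => ENNReal.ofReal |(rIncr ξ Z n ω).2 q|) (q j)

lemma my_det_forward (hm : 0 < m)
    (hT : Tendsto (fun n : ℕ => rT ξ n ω / n) atTop (𝓝 m))
    (hZn : Tendsto (fun n : ℕ => Z (rT ξ n ω) ω / n) atTop (𝓝 b))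
    (hM : Tendsto (fun n : ℕ => (rM ξ Z n ω).toReal / n) atTop (𝓝 0))
    (hMfin : ∀ n, rM ξ Z n ω ≠ ⊤) :
    Tendsto (fun t : ℝ => Z t ω / t) atTop (𝓝 (b / m)) := by
  have htop : Tendsto (fun n => rT ξ n ω) atTop atTop := my_T_atTop hm hT
  set F : ℝ → ℕ := fun t => rN ξ t ω with hF
  have hFtop : Tendsto F atTop atTop := rN_atTop htop
  have hFpos : ∀ᶠ t : ℝ in atTop, 1 ≤ F t ∧ (0:ℝ) ≤ t := by
    filter_upwards [eventually_ge_atTop (max (rT ξ 1 ω) 1)] with t ht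
    have ht1 : rT ξ 1 ω ≤ t := le_trans (le_max_left _ _) ht
    have ht0 : (0:ℝ) ≤ t := le_trans (le_trans zero_le_one (le_max_right _ _)) ht
    exact ⟨rN_ge htop ht1, ht0⟩
  -- t / F t → m by squeeze
  have htF : Tendsto (fun t : ℝ => t / (F t : ℝ)) atTop (𝓝 m) := by
    refine tendsto_of_tendsto_of_tendsto_of_le_of_le'
      (hT.comp hFtop) ((my_T_succ_div hT).comp hFtop) ?_ ?_
    · filter_upwards [hFpos] with t ⟨h1, h0⟩
      exact div_le_div_of_nonneg_right ((rN_spec htop h0).1) (Nat.cast_nonneg _)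
    · filter_upwards [hFpos] with t ⟨h1, h0⟩
      exact div_le_div_of_nonneg_right ((rN_spec htop h0).2).le (Nat.cast_nonneg _)
  have hFt_inv : Tendsto (fun t : ℝ => (F t : ℝ) / t) atTop (𝓝 m⁻¹) := by
    have := htF.inv₀ hm.ne'
    refine this.congr fun t => ?_
    rw [← one_div, one_div_div]
  have hZF : Tendsto (fun t : ℝ => Z (rT ξ (F t) ω) ω / F t) atTop (𝓝 b) := hZn.comp hFtop
  have hMF : Tendsto (fun t : ℝ => (rM ξ Z (F t) ω).toReal / F t) atTop (𝓝 0) := hM.comp hFtop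
  have hdiffb : ∀ᶠ t : ℝ in atTop, |Z t ω - Z (rT ξ (F t) ω) ω| ≤ (rM ξ Z (F t) ω).toReal := by
    filter_upwards [hFpos] with t ⟨h1, h0⟩
    have hmem : t ∈ Set.Icc (rT ξ (F t) ω) (rT ξ (F t + 1) ω) :=
      ⟨(rN_spec htop h0).1, ((rN_spec htop h0).2).le⟩
    have hle : ENNReal.ofReal |Z t ω - Z (rT ξ (F t) ω) ω| ≤ rM ξ Z (F t) ω :=
      le_iSup₂ (f := fun s (_ : s ∈ Set.Icc (rT ξ (F t) ω) (rT ξ (F t + 1) ω)) =>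
        ENNReal.ofReal |Z s ω - Z (rT ξ (F t) ω) ω|) t hmem
    calc |Z t ω - Z (rT ξ (F t) ω) ω|
        = (ENNReal.ofReal |Z t ω - Z (rT ξ (F t) ω) ω|).toReal := by
          rw [ENNReal.toReal_ofReal (abs_nonneg _)]
      _ ≤ (rM ξ Z (F t) ω).toReal := ENNReal.toReal_mono (hMfin _) hle
  have hdiff : Tendsto (fun t : ℝ => (Z t ω - Z (rT ξ (F t) ω) ω) / F t) atTop (𝓝 0) := by
    have hneg : Tendsto (fun t : ℝ => -((rM ξ Z (F t) ω).toReal / F t)) atTop (𝓝 (-0)) := hMF.neg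
    rw [neg_zero] at hneg
    refine tendsto_of_tendsto_of_tendsto_of_le_of_le' hneg hMF ?_ ?_
    · filter_upwards [hdiffb] with t hd
      have hF0 : (0:ℝ) ≤ F t := Nat.cast_nonneg _
      have h1 : -(rM ξ Z (F t) ω).toReal ≤ Z t ω - Z (rT ξ (F t) ω) ω := by
        have := neg_abs_le (Z t ω - Z (rT ξ (F t) ω) ω); linarith
      calc -((rM ξ Z (F t) ω).toReal / F t) = (-(rM ξ Z (F t) ω).toReal) / F t := by ring
        _ ≤ _ := div_le_div_of_nonneg_right h1 hF0
    · filter_upwards [hdiffb] with t hd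
      have hF0 : (0:ℝ) ≤ F t := Nat.cast_nonneg _
      have h1 : Z t ω - Z (rT ξ (F t) ω) ω ≤ (rM ξ Z (F t) ω).toReal := by
        have := le_abs_self (Z t ω - Z (rT ξ (F t) ω) ω); linarith
      exact div_le_div_of_nonneg_right h1 hF0
  have hmain : Tendsto (fun t : ℝ =>
      (Z (rT ξ (F t) ω) ω / F t + (Z t ω - Z (rT ξ (F t) ω) ω) / F t) * ((F t : ℝ) / t))
      atTop (𝓝 ((b + 0) * m⁻¹)) := (hZF.add hdiff).mul hFt_inv
  rw [add_zero, ← div_eq_mul_inv] at hmain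
  refine Tendsto.congr' ?_ hmain
  filter_upwards [hFpos, eventually_ge_atTop (1:ℝ)] with t ⟨h1, h0⟩ ht1
  have hFp : (0:ℝ) < F t := by
    have : (1:ℕ) ≤ F t := h1
    exact_mod_cast Nat.lt_of_lt_of_le Nat.zero_lt_one this
  have ht0 : t ≠ 0 := by linarith
  field_simp
  ring

lemma my_det_backward (hm : 0 < m)
    (hT : Tendsto (fun n : ℕ => rT ξ n ω / n) atTop (𝓝 m))
    (hZt : Tendsto (fun t : ℝ => Z t ω / t) atTop (𝓝 a)) :
    ∀ᶠ n : ℕ in atTop, rM ξ Z n ω ≤ ENNReal.ofReal ((2 * m + 1) * n) := by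
  have htop : Tendsto (fun n => rT ξ n ω) atTop atTop := my_T_atTop hm hT
  -- eventual linear bound |Z t - a t| ≤ t for t ≥ S
  have hS : ∀ᶠ t : ℝ in atTop, |Z t ω - a * t| ≤ t := by
    have h1 : ∀ᶠ t : ℝ in atTop, |Z t ω / t - a| ≤ 1 := by
      have : ∀ᶠ x in 𝓝 a, |x - a| ≤ 1 := by
        have : Metric.closedBall a 1 ∈ 𝓝 a := Metric.closedBall_mem_nhds a one_pos
        filter_upwards [this] with x hx
        simpa [Real.dist_eq] using hx
      exact hZt.eventually this
    filter_upwards [h1, eventually_gt_atTop (0:ℝ)] with t h1 ht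
    have : |Z t ω / t - a| * t ≤ 1 * t := by
      exact mul_le_mul_of_nonneg_right h1 ht.le
    rw [one_mul] at this
    calc |Z t ω - a * t| = |(Z t ω / t - a) * t| := by
          congr 1
          field_simp
      _ = |Z t ω / t - a| * t := by rw [abs_mul, abs_of_pos ht]
      _ ≤ t := this
  obtain ⟨S, hS'⟩ := hS.exists_forall_of_atTop
  -- eventual bounds
  have hTS : ∀ᶠ n : ℕ in atTop, S ≤ rT ξ n ω := htop.eventually (eventually_ge_atTop S)
  have hsum : Tendsto (fun n : ℕ =>
      2 * (rT ξ (n+1) ω / n) + |a| * ((rT ξ (n+1) ω - rT ξ n ω) / n)) atTop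
      (𝓝 (2 * m + |a| * 0)) :=
    ((my_T_succ_div hT).const_mul 2).add ((my_xi_div_tendsto hT).const_mul |a|)
  rw [mul_zero, add_zero] at hsum
  have hev : ∀ᶠ n : ℕ in atTop,
      2 * (rT ξ (n+1) ω / n) + |a| * ((rT ξ (n+1) ω - rT ξ n ω) / n) ≤ 2 * m + 1 :=
    hsum.eventually (eventually_le_nhds (by linarith))
  filter_upwards [hTS, hev, eventually_ge_atTop 1] with n hTSn hevn hn1
  have hnpos : (0:ℝ) < n := by exact_mod_cast Nat.lt_of_lt_of_le Nat.zero_lt_one hn1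
  -- bound each point of the interval
  refine iSup₂_le fun s hs => ?_
  have hsS : S ≤ s := le_trans hTSn hs.1
  have hTn : S ≤ rT ξ n ω := hTSn
  have h1 : |Z s ω - a * s| ≤ s := hS' s hsS
  have h2 : |Z (rT ξ n ω) ω - a * rT ξ n ω| ≤ rT ξ n ω := hS' _ hTn
  have h3 : |a * s - a * rT ξ n ω| ≤ |a| * (rT ξ (n+1) ω - rT ξ n ω) := by
    rw [← mul_sub, abs_mul]
    have h4 : |s - rT ξ n ω| = s - rT ξ n ω := abs_of_nonneg (by linarith [hs.1])
    rw [h4]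
    have : s ≤ rT ξ (n+1) ω := hs.2
    have habs : (0:ℝ) ≤ |a| := abs_nonneg a
    nlinarith
  have hbound : |Z s ω - Z (rT ξ n ω) ω|
      ≤ 2 * rT ξ (n+1) ω + |a| * (rT ξ (n+1) ω - rT ξ n ω) := by
    have hs2 : s ≤ rT ξ (n+1) ω := hs.2
    have hT2 : rT ξ n ω ≤ rT ξ (n+1) ω := le_trans hs.1 hs.2
    calc |Z s ω - Z (rT ξ n ω) ω|
        ≤ |Z s ω - a * s| + |a * s - a * rT ξ n ω| + |a * rT ξ n ω - Z (rT ξ n ω) ω| := by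
          have := abs_sub_le (Z s ω) (a * s) (Z (rT ξ n ω) ω)
          have := abs_sub_le (a * s) (a * rT ξ n ω) (Z (rT ξ n ω) ω)
          have h5 : |a * rT ξ n ω - Z (rT ξ n ω) ω| = |Z (rT ξ n ω) ω - a * rT ξ n ω| :=
            abs_sub_comm _ _
          linarith
      _ ≤ s + |a| * (rT ξ (n+1) ω - rT ξ n ω) + rT ξ n ω := by
          rw [abs_sub_comm (a * rT ξ n ω)]
          linarith
      _ ≤ 2 * rT ξ (n+1) ω + |a| * (rT ξ (n+1) ω - rT ξ n ω) := by linarith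
  refine ENNReal.ofReal_le_ofReal ?_
  calc |Z s ω - Z (rT ξ n ω) ω|
      ≤ 2 * rT ξ (n+1) ω + |a| * (rT ξ (n+1) ω - rT ξ n ω) := hbound
    _ = (2 * (rT ξ (n+1) ω / n) + |a| * ((rT ξ (n+1) ω - rT ξ n ω) / n)) * n := by
        field_simp
    _ ≤ (2 * m + 1) * n := mul_le_mul_of_nonneg_right hevn hnpos.le


end DetHelpers

end StmtNineHelpers

/-- given `E[T_1] < ∞` and `E[|Z(T_1)|] < ∞`, the strong LLN `Z(t)/t → a` a.s.
holds if and only if `E[M_1] < ∞`. -/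
theorem stmt9 (μ : Measure Ω) [IsProbabilityMeasure μ] (ξ : ℕ → Ω → ℝ) (Z : ℝ → Ω → ℝ)
    (hreg : RegenIncrements μ ξ Z)
    (hT : Integrable (ξ 0) μ)
    (hZT : Integrable (fun ω => Z (rT ξ 1 ω) ω) μ) :
    (∀ᵐ ω ∂μ, Tendsto (fun t : ℝ => Z t ω / t) atTop
        (𝓝 ((∫ ω, Z (rT ξ 1 ω) ω ∂μ) / ∫ ω, ξ 0 ω ∂μ))) ↔
      ∫⁻ ω, rM ξ Z 0 ω ∂μ < ⊤ := by
  obtain ⟨hpos, hZ0, hrc, _hll, hind, hid⟩ := hreg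
  have haem : ∀ n, AEMeasurable (rIncr ξ Z n) μ := fun n => (hid n).aemeasurable_fst
  -- measurable functionals on path space
  set φ : ℝ × (ℝ → ℝ) → ℝ := fun p => Filter.liminf (fun k : ℕ => p.2 k) atTop with hφdef
  have hφm : Measurable φ :=
    Measurable.liminf fun k => (measurable_pi_apply ((k : ℕ) : ℝ)).comp measurable_snd
  set ψ : ℝ × (ℝ → ℝ) → ℝ≥0∞ := fun p => ⨆ q : ℚ, ENNReal.ofReal |p.2 q| with hψdef
  have hψm : Measurable ψ :=
    Measurable.iSup fun q => ENNReal.measurable_ofReal.comp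
      (((measurable_pi_apply ((q : ℚ) : ℝ)).comp measurable_snd).abs)
  -- cycle increments
  set X : ℕ → Ω → ℝ := fun n ω => Z (rT ξ (n + 1) ω) ω - Z (rT ξ n ω) ω with hXdef
  have hφX : ∀ n, (fun ω => φ (rIncr ξ Z n ω)) = X n :=
    fun n => funext fun ω => my_phi_incr (hpos n ω)
  have hψ_rM : ∀ n, (fun ω => ψ (rIncr ξ Z n ω)) = rM ξ Z n :=
    fun n => funext fun ω => my_psi_incr (hpos n ω) (hrc ω)
  -- SLLN for the interarrival times
  have hξindep : Pairwise (Function.onFun (IndepFun · · μ) ξ) := by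
    intro i j hij
    have h1 : IndepFun (fun ω => (rIncr ξ Z i ω).1) (fun ω => (rIncr ξ Z j ω).1) μ :=
      (hind.indepFun hij).comp measurable_fst measurable_fst
    exact h1
  have hξident : ∀ i, IdentDistrib (ξ i) (ξ 0) μ μ := by
    intro i
    have h1 : IdentDistrib (fun ω => (rIncr ξ Z i ω).1) (fun ω => (rIncr ξ Z 0 ω).1) μ μ :=
      (hid i).comp measurable_fst
    exact h1
  have hSLξ := strong_law_ae ξ hT hξindep hξident
  set m := ∫ ω, ξ 0 ω ∂μ with hmdef
  have hm : 0 < m := by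
    rw [hmdef, integral_pos_iff_support_of_nonneg_ae
      (Filter.Eventually.of_forall fun ω => (hpos 0 ω).le) hT]
    have : Function.support (ξ 0) = Set.univ := by
      ext ω; simp [Function.mem_support, (hpos 0 ω).ne']
    rw [this]
    simp
  -- SLLN for the cycle increments of Z
  have hX0eq : X 0 = fun ω => Z (rT ξ 1 ω) ω := by
    funext ω
    rw [hXdef]
    simp [rT_zero, hZ0 ω]
  have hXint : Integrable (X 0) μ := by rw [hX0eq]; exact hZT
  have hXindep : Pairwise (Function.onFun (IndepFun · · μ) X) := by
    intro i j hij
    have h1 : IndepFun (fun ω => φ (rIncr ξ Z i ω)) (fun ω => φ (rIncr ξ Z j ω)) μ :=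
      (hind.indepFun hij).comp hφm hφm
    rw [hφX i, hφX j] at h1
    exact h1
  have hXident : ∀ i, IdentDistrib (X i) (X 0) μ μ := by
    intro i
    have h1 : IdentDistrib (fun ω => φ (rIncr ξ Z i ω)) (fun ω => φ (rIncr ξ Z 0 ω)) μ μ :=
      (hid i).comp hφm
    rw [hφX i, hφX 0] at h1
    exact h1
  have hSLX := strong_law_ae X hXint hXindep hXident
  set b := ∫ ω, Z (rT ξ 1 ω) ω ∂μ with hbdef
  have hbX : μ[X 0] = b := by rw [hX0eq, hbdef]
  -- a.e. limit facts
  have haeT : ∀ᵐ ω ∂μ, Tendsto (fun n : ℕ => rT ξ n ω / n) atTop (𝓝 m) := by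
    filter_upwards [hSLξ] with ω hω
    have heq : (fun n : ℕ => rT ξ n ω / n)
        = fun n : ℕ => (n : ℝ)⁻¹ • ∑ i ∈ Finset.range n, ξ i ω := by
      funext n
      rw [smul_eq_mul, ← div_eq_inv_mul]
      rfl
    rw [heq]
    exact hω
  have haeZ : ∀ᵐ ω ∂μ, Tendsto (fun n : ℕ => Z (rT ξ n ω) ω / n) atTop (𝓝 b) := by
    filter_upwards [hSLX] with ω hω
    rw [hbX] at hω
    have heq : (fun n : ℕ => Z (rT ξ n ω) ω / n)
        = fun n : ℕ => (n : ℝ)⁻¹ • ∑ i ∈ Finset.range n, X i ω := by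
      funext n
      rw [smul_eq_mul, ← div_eq_inv_mul]
      congr 1
      have := Finset.sum_range_sub (f := fun i => Z (rT ξ i ω) ω) n
      rw [hXdef]
      simp only at this ⊢
      rw [this, rT_zero, hZ0 ω, sub_zero]
    rw [heq]
    exact hω
  -- identically distributed maxima
  have identM : ∀ n, IdentDistrib (rM ξ Z n) (rM ξ Z 0) μ μ := by
    intro n
    have h1 : IdentDistrib (fun ω => ψ (rIncr ξ Z n ω)) (fun ω => ψ (rIncr ξ Z 0 ω)) μ μ :=
      (hid n).comp hψm
    rw [hψ_rM n, hψ_rM 0] at h1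
    exact h1
  have haemM : AEMeasurable (rM ξ Z 0) μ := by
    rw [← hψ_rM 0]
    exact hψm.comp_aemeasurable (haem 0)
  constructor
  · -- SLLN ⇒ E[M] < ∞
    intro hLHS
    by_contra hnot
    have hinf : ∫⁻ ω, rM ξ Z 0 ω ∂μ = ⊤ := by rwa [not_lt, top_le_iff] at hnot
    set C : ℝ := 2 * m + 1 with hCdef
    have hC : 0 < C := by rw [hCdef]; linarith
    set f : ℕ → Ω → ℝ × (ℝ → ℝ) := fun n => (haem n).mk _ with hfdef
    have hfm : ∀ n, Measurable (f n) := fun n => (haem n).measurable_mk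
    have hfe : ∀ n, rIncr ξ Z n =ᵐ[μ] f n := fun n => (haem n).ae_eq_mk
    have hindf : iIndepFun f μ := my_iIndepFun_ae_eq hind hfe
    set S : ℕ → Set (ℝ × (ℝ → ℝ)) := fun n => ψ ⁻¹' (Set.Ioi (ENNReal.ofReal (C * n)))
      with hSdef
    have hSm : ∀ n, MeasurableSet (S n) := fun n => hψm measurableSet_Ioi
    set A : ℕ → Set Ω := fun n => f n ⁻¹' S n with hAdef
    have hAm : ∀ n, MeasurableSet (A n) := fun n => (hfm n) (hSm n)
    have hAind : iIndepSet A μ := my_iIndepSet_preimage hindf hSm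
    have hμA : ∀ n, μ (A n) = μ {ω | ENNReal.ofReal (C * n) < rM ξ Z 0 ω} := by
      intro n
      have h1 : A n =ᵐ[μ] {ω | ENNReal.ofReal (C * n) < rM ξ Z n ω} := by
        filter_upwards [hfe n] with ω hω
        show (ω ∈ A n) = (ω ∈ {ω | ENNReal.ofReal (C * n) < rM ξ Z n ω})
        simp only [hAdef, hSdef, Set.mem_preimage, Set.mem_Ioi, Set.mem_setOf_eq]
        rw [← hω, congrFun (hψ_rM n) ω]
      rw [measure_congr h1]
      exact (identM n).measure_mem_eq measurableSet_Ioi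
    have hsum : ∑' n : ℕ, μ (A n) = ∞ := by
      rw [tsum_congr hμA]
      exact my_tsum_meas_ge haemM hC hinf
    have hone := measure_limsup_eq_one hAm hAind hsum
    have hae_limsup : ∀ᵐ ω ∂μ, ω ∈ limsup A atTop := by
      have hms : MeasurableSet (limsup A atTop) := MeasurableSet.measurableSet_limsup hAm
      have hcompl : μ (limsup A atTop)ᶜ = 0 := by
        rw [measure_compl hms (measure_ne_top μ _), hone]
        simp
      filter_upwards [(measure_eq_zero_iff_ae_notMem).1 hcompl] with ω hω
      exact Set.not_notMem.1 hω
    have haefψ : ∀ᵐ ω ∂μ, ∀ n, ψ (f n ω) = rM ξ Z n ω := by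
      rw [ae_all_iff]
      intro n
      filter_upwards [hfe n] with ω hω
      rw [← hω, congrFun (hψ_rM n) ω]
    have haeD2 : ∀ᵐ ω ∂μ, ∀ᶠ n : ℕ in atTop,
        rM ξ Z n ω ≤ ENNReal.ofReal ((2 * m + 1) * n) := by
      filter_upwards [haeT, hLHS] with ω h1 h2
      exact my_det_backward hm h1 h2
    have hfalse : ∀ᵐ ω ∂μ, False := by
      filter_upwards [hae_limsup, haefψ, haeD2] with ω hω1 hω2 hω3
      rw [mem_limsup_iff_frequently_mem] at hω1
      obtain ⟨n, hn1, hn2⟩ := (hω1.and_eventually hω3).exists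
      have hlt : ENNReal.ofReal (C * n) < rM ξ Z n ω := by
        have := hn1
        simp only [hAdef, hSdef, Set.mem_preimage, Set.mem_Ioi] at this
        rwa [hω2 n] at this
      rw [hCdef] at hlt
      exact absurd hn2 (not_le.2 hlt)
    have hne : (ae μ).NeBot := IsProbabilityMeasure.ae_neBot
    obtain ⟨ω, hω⟩ := hfalse.exists
    exact hω.elim
  · -- E[M] < ∞ ⇒ SLLN
    intro hfin
    have hMfinae : ∀ᵐ ω ∂μ, ∀ n, rM ξ Z n ω ≠ ⊤ := by
      rw [ae_all_iff]
      intro n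
      have h0 : μ {ω | rM ξ Z 0 ω = ⊤} = 0 := by
        have h1 := ae_lt_top' haemM hfin.ne
        rw [ae_iff] at h1
        have : {ω | ¬rM ξ Z 0 ω < ⊤} = {ω | rM ξ Z 0 ω = ⊤} := by
          ext ω; simp [lt_top_iff_ne_top]
        rwa [this] at h1
      have h2 : μ {ω | rM ξ Z n ω = ⊤} = 0 := by
        have := (identM n).measure_mem_eq (measurableSet_singleton (⊤ : ℝ≥0∞))
        simpa [Set.preimage, Set.mem_singleton_iff] using this.trans h0
      rw [ae_iff]
      simpa using h2
    have hMsmall : ∀ᵐ ω ∂μ, ∀ k : ℕ, ∀ᶠ n : ℕ in atTop,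
        rM ξ Z n ω ≤ ENNReal.ofReal ((1 / ((k:ℝ) + 1)) * n) := by
      rw [ae_all_iff]
      intro k
      have hc : (0:ℝ) < 1 / ((k:ℝ) + 1) := by positivity
      set s : ℕ → Set Ω :=
        fun n => {ω | ENNReal.ofReal ((1 / ((k:ℝ) + 1)) * n) < rM ξ Z n ω} with hsdef
      have hμs : ∀ n, μ (s n)
          = μ {ω | ENNReal.ofReal ((1 / ((k:ℝ) + 1)) * n) < rM ξ Z 0 ω} := by
        intro n
        exact (identM n).measure_mem_eq measurableSet_Ioi
      have hsum : ∑' n : ℕ, μ (s n) ≠ ∞ := by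
        rw [tsum_congr hμs]
        exact my_tsum_meas_le haemM hc hfin.ne
      have hlim := measure_limsup_atTop_eq_zero hsum
      filter_upwards [(measure_eq_zero_iff_ae_notMem).1 hlim] with ω hω
      rw [mem_limsup_iff_frequently_mem, Filter.not_frequently] at hω
      filter_upwards [hω] with n hn
      exact not_lt.1 fun h => hn h
    filter_upwards [haeT, haeZ, hMfinae, hMsmall] with ω h1 h2 h3 h4
    exact my_det_forward hm h1 h2 (my_toReal_div_tendsto h3 h4) h3
end
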